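/- arXiv:1906.09464 — 2 statements merged into one kernel-verified Lean document; each statement's English description precedes it below -/
import Mathlib

section
/- Let f : X → ℝ be measurable with |||f|||_β < ∞, and let h = ∫ f dμ*, where μ* is the unique P-invariant probability measure with ∫ V dμ* < ∞ (which coincides with the unique P^r-invariant one). Then the series u(x) = Σ_{n≥0} ((P^{*n} f)(x) − h) converges absolutely for every x, u solves the Poisson equation u(x) − (P*u)(x) = f(x) − h, any two solutions with finite ‖·‖_β differ by a constant, and there is a constant C > 0, depending only on r, γ_r, K_r, γ₁, K₁, β, α_r, such that |u(x)| ≤ C |||f|||_β (1 + βV(x)) for all x. -/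
open MeasureTheory ProbabilityTheory ENNReal

noncomputable section

set_option linter.unusedSectionVars false

namespace PoissonPaper

variable {X : Type*} [MeasurableSpace X]

/-- The weighted sup-norm `‖φ‖_β = sup_x |φ(x)| / (1 + β V(x))`, valued in `ℝ≥0∞`. -/
def wnorm (β : ℝ) (V : X → ℝ) (φ : X → ℝ) : ℝ≥0∞ :=
  ⨆ x, ENNReal.ofReal (|φ x| / (1 + β * V x))

open Classical in
/-- The metric `d_β(x,y) = 2 + βV(x) + βV(y)` for `x ≠ y`, `0` on the diagonal. -/
def dBeta (β : ℝ) (V : X → ℝ) (x y : X) : ℝ :=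
  if x = y then 0 else 2 + β * V x + β * V y

/-- The oscillation seminorm `|||φ|||_β = sup_{x ≠ y} |φ(x) - φ(y)| / d_β(x,y)`,
valued in `ℝ≥0∞`.  (For `x = y` the quotient is `0/0 = 0`, so the diagonal does
not contribute.) -/
def osc (β : ℝ) (V : X → ℝ) (φ : X → ℝ) : ℝ≥0∞ :=
  ⨆ x, ⨆ y, ENNReal.ofReal (|φ x - φ y| / dBeta β V x y)

/-- Action of a kernel on functions: `(P*φ)(x) = ∫ φ(y) P(x,dy)`. -/
def act (P : Kernel X X) (φ : X → ℝ) : X → ℝ := fun x => ∫ y, φ y ∂(P x)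

/-- Drift inequality `(P*V)(x) ≤ γ V(x) + K`, with the integral taken in the
lower-integral sense (recall `V ≥ 0`). -/
def Drift (P : Kernel X X) (V : X → ℝ) (γ K : ℝ) : Prop :=
  ∀ x, ∫⁻ y, ENNReal.ofReal (V y) ∂(P x) ≤ ENNReal.ofReal (γ * V x + K)

instance bindIsFinite (μ : Measure X) [IsFiniteMeasure μ] (P : Kernel X X) [IsMarkovKernel P] :
    IsFiniteMeasure (μ.bind P) := by
  constructor
  rw [Measure.bind_apply MeasurableSet.univ (Kernel.measurable P).aemeasurable]
  calc ∫⁻ x, (P x) Set.univ ∂μ = ∫⁻ _, 1 ∂μ := by simp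
    _ = μ Set.univ := by simp
    _ < ⊤ := measure_lt_top μ _

/-- The total variation measure `|μ₁ - μ₂|` of the difference of two finite measures. -/
def tv (μ₁ μ₂ : Measure X) [IsFiniteMeasure μ₁] [IsFiniteMeasure μ₂] : Measure X :=
  (μ₁.toSignedMeasure - μ₂.toSignedMeasure).totalVariation

/-- `σ_β(μ₁, μ₂) = ∫ (1 + βV) d|μ₁ - μ₂|`. -/
def sigmaB (β : ℝ) (V : X → ℝ) (μ₁ μ₂ : Measure X) [IsFiniteMeasure μ₁] [IsFiniteMeasure μ₂] :
    ℝ :=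
  ∫ x, (1 + β * V x) ∂(tv μ₁ μ₂)

/-- `σ_β(η) = ∫ (1 + βV) d|η|` for a finite signed measure `η`. -/
def sigmaS (β : ℝ) (V : X → ℝ) (η : SignedMeasure X) : ℝ :=
  ∫ x, (1 + β * V x) ∂(η.totalVariation)

/-- `n`-fold iterate (power) of a kernel. -/
def kpow (P : Kernel X X) : ℕ → Kernel X X
  | 0 => Kernel.id
  | n + 1 => P ∘ₖ kpow P n

instance kpowIsMarkov (P : Kernel X X) [IsMarkovKernel P] : ∀ n, IsMarkovKernel (kpow P n)
  | 0 => by rw [kpow]; infer_instance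
  | n + 1 => by have := kpowIsMarkov P n; rw [kpow]; infer_instance

/-- Action of a (Markov) kernel on finite signed measures, via the Jordan decomposition. -/
def sbind (P : Kernel X X) [IsMarkovKernel P] (η : SignedMeasure X) : SignedMeasure X :=
  (η.toJordanDecomposition.posPart.bind P).toSignedMeasure -
    (η.toJordanDecomposition.negPart.bind P).toSignedMeasure

section Aux

variable {V : X → ℝ} {β : ℝ}

/-- Lipschitz-type bound with respect to `dBeta`. -/
def LipB (β : ℝ) (V : X → ℝ) (ℓ : ℝ) (φ : X → ℝ) : Prop :=
  ∀ x y, |φ x - φ y| ≤ ℓ * dBeta β V x y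

lemma dBeta_nonneg (hV0 : ∀ x, 0 ≤ V x) (hβ : 0 ≤ β) (x y : X) : 0 ≤ dBeta β V x y := by
  by_cases h : x = y <;> simp [dBeta, h]
  nlinarith [mul_nonneg hβ (hV0 x), mul_nonneg hβ (hV0 y)]

lemma dBeta_pos (hV0 : ∀ x, 0 ≤ V x) (hβ : 0 ≤ β) {x y : X} (h : x ≠ y) :
    0 < dBeta β V x y := by
  simp [dBeta, h]
  nlinarith [mul_nonneg hβ (hV0 x), mul_nonneg hβ (hV0 y)]

lemma dBeta_le (hV0 : ∀ x, 0 ≤ V x) (hβ : 0 ≤ β) (x y : X) :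
    dBeta β V x y ≤ 2 + β * V x + β * V y := by
  by_cases h : x = y <;> simp [dBeta, h]
  nlinarith [mul_nonneg hβ (hV0 x), mul_nonneg hβ (hV0 y)]

lemma LipB.mono (hV0 : ∀ x, 0 ≤ V x) (hβ : 0 ≤ β) {ℓ ℓ' : ℝ} {φ : X → ℝ}
    (h : LipB β V ℓ φ) (hle : ℓ ≤ ℓ') : LipB β V ℓ' φ := fun x y =>
  (h x y).trans (mul_le_mul_of_nonneg_right hle (dBeta_nonneg hV0 hβ x y))

lemma osc_le_ofReal_iff (hV0 : ∀ x, 0 ≤ V x) (hβ : 0 ≤ β) {ℓ : ℝ} (hℓ : 0 ≤ ℓ) {φ : X → ℝ} :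
    osc β V φ ≤ ENNReal.ofReal ℓ ↔ LipB β V ℓ φ := by
  constructor
  · intro h x y
    by_cases hxy : x = y
    · simp [hxy, dBeta]
    · have h0 : ENNReal.ofReal (|φ x - φ y| / dBeta β V x y) ≤ osc β V φ := by
        unfold osc
        exact le_iSup_of_le x (le_iSup_of_le y le_rfl)
      have h1 : ENNReal.ofReal (|φ x - φ y| / dBeta β V x y) ≤ ENNReal.ofReal ℓ := h0.trans h
      have h2 : |φ x - φ y| / dBeta β V x y ≤ ℓ := (ENNReal.ofReal_le_ofReal_iff hℓ).mp h1
      have h3 := dBeta_pos hV0 hβ hxy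
      calc |φ x - φ y| = (|φ x - φ y| / dBeta β V x y) * dBeta β V x y := by
            field_simp
        _ ≤ ℓ * dBeta β V x y := mul_le_mul_of_nonneg_right h2 h3.le
  · intro h
    refine iSup_le fun x => iSup_le fun y => ?_
    by_cases hxy : x = y
    · simp [hxy, dBeta]
    · have h3 := dBeta_pos hV0 hβ hxy
      exact ENNReal.ofReal_le_ofReal ((div_le_iff₀ h3).mpr (h x y))

lemma lipB_of_osc_lt_top (hV0 : ∀ x, 0 ≤ V x) (hβ : 0 ≤ β) {φ : X → ℝ}
    (h : osc β V φ < ⊤) : LipB β V (osc β V φ).toReal φ :=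
  (osc_le_ofReal_iff hV0 hβ ENNReal.toReal_nonneg).mp
    (le_of_eq (ENNReal.ofReal_toReal h.ne).symm)

lemma LipB.abs_le (hV0 : ∀ x, 0 ≤ V x) (hβ : 0 ≤ β) {ℓ : ℝ} {φ : X → ℝ}
    (hℓ : 0 ≤ ℓ) (h : LipB β V ℓ φ) (x₀ y : X) :
    |φ y| ≤ (|φ x₀| + ℓ * (2 + β * V x₀)) + ℓ * β * V y := by
  have h1 := h y x₀
  have h2 := dBeta_le hV0 hβ y x₀
  have h3 : |φ y| ≤ |φ y - φ x₀| + |φ x₀| := by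
    calc |φ y| = |(φ y - φ x₀) + φ x₀| := by ring_nf
      _ ≤ _ := abs_add_le _ _
  nlinarith [mul_le_mul_of_nonneg_left h2 hℓ]


section Aux2

variable {P : Kernel X X} [IsMarkovKernel P]

lemma integrable_V_of_drift (hV0 : ∀ x, 0 ≤ V x) (hVmeas : Measurable V) {γ K : ℝ}
    (hdrift : Drift P V γ K) (x : X) : Integrable V (P x) := by
  refine ⟨hVmeas.aestronglyMeasurable, ?_⟩
  rw [hasFiniteIntegral_iff_ofReal (Filter.Eventually.of_forall hV0)]
  exact lt_of_le_of_lt (hdrift x) ENNReal.ofReal_lt_top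

lemma integral_V_le (hV0 : ∀ x, 0 ≤ V x) (hVmeas : Measurable V) {γ K : ℝ}
    (hγ : 0 ≤ γ) (hK : 0 ≤ K) (hdrift : Drift P V γ K) (x : X) :
    ∫ y, V y ∂(P x) ≤ γ * V x + K := by
  rw [integral_eq_lintegral_of_nonneg_ae (Filter.Eventually.of_forall hV0) hVmeas.aestronglyMeasurable]
  calc (∫⁻ y, ENNReal.ofReal (V y) ∂(P x)).toReal
      ≤ (ENNReal.ofReal (γ * V x + K)).toReal :=
        ENNReal.toReal_mono ENNReal.ofReal_ne_top (hdrift x)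
    _ = γ * V x + K := ENNReal.toReal_ofReal (by nlinarith [mul_nonneg hγ (hV0 x)])

lemma integrable_affine {ν : Measure X} [IsFiniteMeasure ν] (hVint : Integrable V ν) (a b : ℝ) :
    Integrable (fun y => a + b * V y) ν :=
  (integrable_const a).add (hVint.const_mul b)

lemma LipB.integrable (hV0 : ∀ x, 0 ≤ V x) (hβ : 0 ≤ β) {ℓ : ℝ} (hℓ : 0 ≤ ℓ) {φ : X → ℝ}
    (hφ : Measurable φ) (h : LipB β V ℓ φ) {ν : Measure X} [IsFiniteMeasure ν]
    (hVint : Integrable V ν) (x₀ : X) : Integrable φ ν := by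
  refine Integrable.mono' (integrable_affine hVint (|φ x₀| + ℓ * (2 + β * V x₀)) (ℓ * β))
    hφ.aestronglyMeasurable ?_
  exact Filter.Eventually.of_forall fun y => by
    simpa [Real.norm_eq_abs, mul_assoc] using h.abs_le hV0 hβ hℓ x₀ y

lemma measurable_act {φ : X → ℝ} (hφ : Measurable φ) : Measurable (act P φ) := by
  have h : StronglyMeasurable (Function.uncurry fun (_ : X) (y : X) => φ y) :=
    (hφ.comp measurable_snd).stronglyMeasurable
  exact (h.integral_kernel_prod_right (κ := P)).measurable

lemma act_sub_self_le (hV0 : ∀ x, 0 ≤ V x) (hVmeas : Measurable V) (hβ : 0 ≤ β)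
    {γ₁ K₁ : ℝ} (hγ₁ : 0 ≤ γ₁) (hK₁ : 0 ≤ K₁) (hgrow : Drift P V γ₁ K₁)
    {ℓ : ℝ} (hℓ : 0 ≤ ℓ) {φ : X → ℝ} (hφ : Measurable φ) (h : LipB β V ℓ φ) (x : X) :
    |act P φ x - φ x| ≤ ℓ * (2 + β * V x + β * (γ₁ * V x + K₁)) := by
  have hVint : Integrable V (P x) := integrable_V_of_drift hV0 hVmeas hgrow x
  have hφint : Integrable φ (P x) := h.integrable hV0 hβ hℓ hφ hVint x
  have h1 : act P φ x - φ x = ∫ y, (φ y - φ x) ∂(P x) := by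
    rw [integral_sub hφint (integrable_const _), integral_const]
    simp [act]
  rw [h1]
  have hVle : ∫ y, V y ∂(P x) ≤ γ₁ * V x + K₁ := integral_V_le hV0 hVmeas hγ₁ hK₁ hgrow x
  calc |∫ y, (φ y - φ x) ∂(P x)| ≤ ∫ y, |φ y - φ x| ∂(P x) := by
        simpa [Real.norm_eq_abs] using
          norm_integral_le_integral_norm (μ := P x) (f := fun y => φ y - φ x)
    _ ≤ ∫ y, (ℓ * (2 + β * V x) + ℓ * β * V y) ∂(P x) := by
        refine integral_mono (hφint.sub (integrable_const _)).abs
          (integrable_affine hVint _ _) fun y => ?_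
        have h2 := (h y x).trans
          (mul_le_mul_of_nonneg_left (dBeta_le hV0 hβ y x) hℓ)
        dsimp
        nlinarith [h2]
    _ = ℓ * (2 + β * V x) + ℓ * β * ∫ y, V y ∂(P x) := by
        rw [integral_add (integrable_const _) (hVint.const_mul _), integral_const,
          integral_const_mul]
        simp
    _ ≤ ℓ * (2 + β * V x + β * (γ₁ * V x + K₁)) := by
        nlinarith [mul_le_mul_of_nonneg_left hVle (mul_nonneg hℓ hβ)]

lemma lip_act (hV0 : ∀ x, 0 ≤ V x) (hVmeas : Measurable V) (hβ : 0 ≤ β)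
    {γ₁ K₁ : ℝ} (hγ₁ : 1 ≤ γ₁) (hK₁ : 0 ≤ K₁) (hgrow : Drift P V γ₁ K₁)
    {ℓ : ℝ} (hℓ : 0 ≤ ℓ) {φ : X → ℝ} (hφ : Measurable φ) (h : LipB β V ℓ φ) :
    LipB β V ((3 + β * K₁ + γ₁) * ℓ) (act P φ) := by
  have hγ₁' : (0:ℝ) ≤ γ₁ := by linarith
  intro x y
  by_cases hxy : x = y
  · simp [hxy, dBeta]
  · have hx := act_sub_self_le hV0 hVmeas hβ hγ₁' hK₁ hgrow hℓ hφ h x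
    have hy := act_sub_self_le hV0 hVmeas hβ hγ₁' hK₁ hgrow hℓ hφ h y
    have hxy2 := h x y
    have hd : dBeta β V x y = 2 + β * V x + β * V y := by simp [dBeta, hxy]
    rw [hd] at hxy2 ⊢
    have t1 : |act P φ x - act P φ y| ≤ |act P φ x - φ x| + |φ x - φ y| + |act P φ y - φ y| := by
      have e1 := abs_sub_le (act P φ x) (φ x) (act P φ y)
      have e2 := abs_sub_le (φ x) (φ y) (act P φ y)
      have e3 : |φ y - act P φ y| = |act P φ y - φ y| := abs_sub_comm _ _
      linarith
    have hbx : (0:ℝ) ≤ β * V x := mul_nonneg hβ (hV0 x)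
    have hby : (0:ℝ) ≤ β * V y := mul_nonneg hβ (hV0 y)
    have hbk : (0:ℝ) ≤ β * K₁ := mul_nonneg hβ hK₁
    nlinarith [mul_nonneg hℓ hbx, mul_nonneg hℓ hby, mul_nonneg hℓ hbk,
      mul_nonneg (mul_nonneg hℓ hbk) hbx, mul_nonneg (mul_nonneg hℓ hbk) hby,
      mul_nonneg (mul_nonneg hℓ hγ₁') hbx, mul_nonneg (mul_nonneg hℓ hγ₁') hby,
      mul_nonneg hℓ (mul_nonneg hγ₁' hbx)]


lemma act_dominated_integrable (hV0 : ∀ x, 0 ≤ V x) (hVmeas : Measurable V) (hβ : 0 ≤ β)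
    {γ₁ K₁ : ℝ} (hγ₁ : 0 ≤ γ₁) (hK₁ : 0 ≤ K₁) (hgrow : Drift P V γ₁ K₁)
    {ℓ : ℝ} (hℓ : 0 ≤ ℓ) {φ : X → ℝ} (h : LipB β V ℓ φ) (x₀ : X)
    {ψ : X → ℝ} (hψ : Measurable ψ) (hψle : ∀ y, |ψ y| ≤ |φ y|)
    {μ : Measure X} [IsFiniteMeasure μ] (hVμ : Integrable V μ) :
    Integrable (act P ψ) μ := by
  set c₀ : ℝ := |φ x₀| + ℓ * (2 + β * V x₀) with hc₀
  have habs : ∀ y, |φ y| ≤ c₀ + ℓ * β * V y := h.abs_le hV0 hβ hℓ x₀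
  have hby : ∀ x, |act P ψ x| ≤ (c₀ + ℓ * β * K₁) + ℓ * β * γ₁ * V x := by
    intro x
    have hVint := integrable_V_of_drift hV0 hVmeas hgrow x
    have hψint : Integrable ψ (P x) := by
      refine Integrable.mono' (integrable_affine hVint c₀ (ℓ * β)) hψ.aestronglyMeasurable
        (Filter.Eventually.of_forall fun y => ?_)
      simp only [Real.norm_eq_abs]
      exact (hψle y).trans (by simpa [mul_assoc] using habs y)
    have hVle := integral_V_le hV0 hVmeas hγ₁ hK₁ hgrow x
    calc |act P ψ x| ≤ ∫ y, |ψ y| ∂(P x) := by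
          simpa [Real.norm_eq_abs, act] using norm_integral_le_integral_norm (μ := P x) (f := ψ)
      _ ≤ ∫ y, (c₀ + ℓ * β * V y) ∂(P x) := by
          refine integral_mono hψint.abs ?_ fun y => (hψle y).trans (habs y)
          simpa [mul_assoc] using integrable_affine hVint c₀ (ℓ * β)
      _ = c₀ + ℓ * β * ∫ y, V y ∂(P x) := by
          have e := integral_add (μ := P x) (integrable_const c₀) (hVint.const_mul (ℓ * β))
          simp only [mul_assoc] at e ⊢
          rw [e, integral_const, integral_const_mul, integral_const_mul]
          simp
      _ ≤ _ := by nlinarith [mul_le_mul_of_nonneg_left hVle (mul_nonneg hℓ hβ)]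
  refine Integrable.mono' (integrable_affine hVμ (c₀ + ℓ * β * K₁) (ℓ * β * γ₁))
    (measurable_act hψ).aestronglyMeasurable (Filter.Eventually.of_forall fun x => ?_)
  simpa [Real.norm_eq_abs, mul_assoc] using hby x

lemma max_split (a : ℝ) : max a 0 - max (-a) 0 = a := by
  rcases le_total 0 a with h | h
  · rw [max_eq_left h, max_eq_right (by linarith : -a ≤ 0)]; ring
  · rw [max_eq_right h, max_eq_left (by linarith : (0:ℝ) ≤ -a)]; ring

lemma integral_act_nonneg_eq (μ : Measure X) [IsFiniteMeasure μ]
    {φ : X → ℝ} (hφ : Measurable φ) (h0 : ∀ y, 0 ≤ φ y)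
    (hiP : ∀ x, Integrable φ (P x)) :
    ∫ x, act P φ x ∂μ = ∫ y, φ y ∂(μ.bind ⇑P) := by
  have hact0 : ∀ x, 0 ≤ act P φ x := fun x => integral_nonneg h0
  rw [integral_eq_lintegral_of_nonneg_ae (Filter.Eventually.of_forall hact0)
      (measurable_act hφ).aestronglyMeasurable,
    integral_eq_lintegral_of_nonneg_ae (Filter.Eventually.of_forall h0)
      hφ.aestronglyMeasurable]
  congr 1
  rw [Measure.lintegral_bind (Kernel.measurable P).aemeasurable hφ.ennreal_ofReal.aemeasurable]
  refine lintegral_congr fun x => ?_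
  have hfin : (∫⁻ y, ENNReal.ofReal (φ y) ∂(P x)) ≠ ⊤ :=
    ((hasFiniteIntegral_iff_ofReal (Filter.Eventually.of_forall h0)).mp (hiP x).2).ne
  have hx : act P φ x = (∫⁻ y, ENNReal.ofReal (φ y) ∂(P x)).toReal := by
    unfold act
    rw [integral_eq_lintegral_of_nonneg_ae (Filter.Eventually.of_forall h0)
      hφ.aestronglyMeasurable]
  rw [hx, ENNReal.ofReal_toReal hfin]

lemma integral_act_eq (μ : Measure X) [IsFiniteMeasure μ]
    {φ : X → ℝ} (hφ : Measurable φ) (hiP : ∀ x, Integrable φ (P x))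
    (hbind : Integrable φ (μ.bind ⇑P))
    (hip : Integrable (act P (fun y => max (φ y) 0)) μ)
    (him : Integrable (act P (fun y => max (-φ y) 0)) μ) :
    ∫ x, act P φ x ∂μ = ∫ y, φ y ∂(μ.bind ⇑P) := by
  have hφp : Measurable (fun y => max (φ y) 0) := hφ.max measurable_const
  have hφm : Measurable (fun y => max (-φ y) 0) := hφ.neg.max measurable_const
  have hact : ∀ x, act P φ x
      = act P (fun y => max (φ y) 0) x - act P (fun y => max (-φ y) 0) x := by
    intro x
    unfold act
    have hsub := integral_sub (hiP x).pos_part ((hiP x).neg.pos_part)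
    simp only [Pi.neg_apply] at hsub
    rw [← hsub]
    exact integral_congr_ae (Filter.Eventually.of_forall fun y => (max_split (φ y)).symm)
  calc ∫ x, act P φ x ∂μ
      = ∫ x, (act P (fun y => max (φ y) 0) x - act P (fun y => max (-φ y) 0) x) ∂μ :=
        integral_congr_ae (Filter.Eventually.of_forall hact)
    _ = (∫ x, act P (fun y => max (φ y) 0) x ∂μ) - ∫ x, act P (fun y => max (-φ y) 0) x ∂μ :=
        integral_sub hip him
    _ = (∫ y, max (φ y) 0 ∂(μ.bind ⇑P)) - ∫ y, max (-φ y) 0 ∂(μ.bind ⇑P) := by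
        rw [integral_act_nonneg_eq μ hφp (fun y => le_max_right _ _)
            (fun x => (hiP x).pos_part),
          integral_act_nonneg_eq μ hφm (fun y => le_max_right _ _)
            (fun x => (hiP x).neg.pos_part)]
    _ = ∫ y, (max (φ y) 0 - max (-φ y) 0) ∂(μ.bind ⇑P) :=
        (integral_sub hbind.pos_part hbind.neg.pos_part).symm
    _ = ∫ y, φ y ∂(μ.bind ⇑P) :=
        integral_congr_ae (Filter.Eventually.of_forall fun y => max_split (φ y))

lemma wnorm_bound (hV0 : ∀ x, 0 ≤ V x) (hβ : 0 ≤ β) {u : X → ℝ}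
    (h : wnorm β V u < ⊤) (x : X) : |u x| ≤ (wnorm β V u).toReal * (1 + β * V x) := by
  have hpos : (0:ℝ) < 1 + β * V x := by nlinarith [mul_nonneg hβ (hV0 x)]
  have h1 : ENNReal.ofReal (|u x| / (1 + β * V x)) ≤ wnorm β V u := by
    unfold wnorm
    exact le_iSup_of_le x le_rfl
  rw [← ENNReal.ofReal_toReal h.ne] at h1
  have h2 := (ENNReal.ofReal_le_ofReal_iff ENNReal.toReal_nonneg).mp h1
  calc |u x| = (|u x| / (1 + β * V x)) * (1 + β * V x) := by field_simp
    _ ≤ _ := mul_le_mul_of_nonneg_right h2 hpos.le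

lemma osc_eq_zero_const (hV0 : ∀ x, 0 ≤ V x) (hβ : 0 ≤ β) {w : X → ℝ}
    (h : osc β V w = 0) (x y : X) : w x = w y := by
  by_cases hxy : x = y
  · rw [hxy]
  · have h0 : ENNReal.ofReal (|w x - w y| / dBeta β V x y) ≤ osc β V w := by
      unfold osc
      exact le_iSup_of_le x (le_iSup_of_le y le_rfl)
    rw [h] at h0
    have h2 : |w x - w y| / dBeta β V x y ≤ 0 :=
      ENNReal.ofReal_eq_zero.mp (le_antisymm h0 zero_le)
    have h3 := dBeta_pos hV0 hβ hxy
    have h4 : |w x - w y| ≤ 0 := by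
      calc |w x - w y| = (|w x - w y| / dBeta β V x y) * dBeta β V x y := by field_simp
        _ ≤ 0 := by nlinarith
    have := abs_nonneg (w x - w y)
    have h5 : w x - w y = 0 := by
      rw [← abs_eq_zero]; linarith
    linarith

lemma summable_geom_div (r : ℕ) (hr : 0 < r) {α : ℝ} (h0 : 0 ≤ α) (h1 : α < 1) :
    Summable (fun n : ℕ => α ^ (n / r)) := by
  haveI : NeZero r := ⟨hr.ne'⟩
  have key : Summable (fun p : ℕ × Fin r => α ^ p.1) := by
    rw [summable_prod_of_nonneg (fun p => pow_nonneg h0 _)]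
    refine ⟨fun b => Summable.of_finite, ?_⟩
    have he : (fun b : ℕ => ∑' _ : Fin r, α ^ b) = fun b : ℕ => (r : ℝ) * α ^ b := by
      funext b
      rw [tsum_fintype]
      simp [Finset.sum_const, nsmul_eq_mul]
    rw [he]
    exact (summable_geometric_of_lt_one h0 h1).mul_left _
  have he2 : (fun n : ℕ => α ^ (n / r))
      = (fun p : ℕ × Fin r => α ^ p.1) ∘ (Nat.divModEquiv r) := rfl
  rw [he2]
  exact ((Nat.divModEquiv r).summable_iff).mpr key

end Aux2

end Aux
set_option maxHeartbeats 1000000 in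
/-- Existence, uniqueness up to constants, and a bound for the solution
of the Poisson equation, under the relaxed (`r`-step) conditions. -/
theorem poisson_equation_solution_relaxed
    {X : Type*} [MeasurableSpace X] (V : X → ℝ) (hVmeas : Measurable V)
    (hV0 : ∀ x, 0 ≤ V x) (β : ℝ) (hβ : 0 < β)
    (P : Kernel X X) [IsMarkovKernel P]
    (r : ℕ) (hr : 0 < r)
    (γr Kr : ℝ) (hγr : γr ∈ Set.Ioo (0:ℝ) 1) (hKr : 0 ≤ Kr)
    (hdriftr : Drift (kpow P r) V γr Kr)
    (γ₁ K₁ : ℝ) (hγ₁ : 1 < γ₁) (hK₁ : 0 ≤ K₁) (hgrow : Drift P V γ₁ K₁)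
    (α_r : ℝ) (hαr : α_r ∈ Set.Ioo γr 1)
    (hosc_r : ∀ φ : X → ℝ, Measurable φ → osc β V φ < ⊤ →
      osc β V ((act P)^[r] φ) ≤ ENNReal.ofReal α_r * osc β V φ)
    (hsig_r : ∀ (μ₁ μ₂ : Measure X) [IsProbabilityMeasure μ₁] [IsProbabilityMeasure μ₂],
      Integrable V μ₁ → Integrable V μ₂ →
      sigmaB β V (μ₁.bind (kpow P r)) (μ₂.bind (kpow P r)) ≤ α_r * sigmaB β V μ₁ μ₂)
    (μst : Measure X) [IsProbabilityMeasure μst] (hμint : Integrable V μst)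
    (hμinv : μst.bind P = μst)
    (hμuniq : ∀ (ν : Measure X) [IsProbabilityMeasure ν], Integrable V ν →
      ν.bind P = ν → ν = μst)
    (hμinv_r : μst.bind (kpow P r) = μst)
    (hμuniq_r : ∀ (ν : Measure X) [IsProbabilityMeasure ν], Integrable V ν →
      ν.bind (kpow P r) = ν → ν = μst)
    (f : X → ℝ) (hf : Measurable f) (hffin : osc β V f < ⊤) :
    (∀ x, Summable fun n : ℕ => |(act P)^[n] f x - ∫ y, f y ∂μst|) ∧
    (∀ x, (∑' n : ℕ, ((act P)^[n] f x - ∫ y, f y ∂μst))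
        - act P (fun z => ∑' n : ℕ, ((act P)^[n] f z - ∫ y, f y ∂μst)) x
        = f x - ∫ y, f y ∂μst) ∧
    (∀ u₁ u₂ : X → ℝ, Measurable u₁ → Measurable u₂ →
      wnorm β V u₁ < ⊤ → wnorm β V u₂ < ⊤ →
      (∀ x, u₁ x - act P u₁ x = f x - ∫ y, f y ∂μst) →
      (∀ x, u₂ x - act P u₂ x = f x - ∫ y, f y ∂μst) →
      ∃ c : ℝ, ∀ x, u₂ x = u₁ x + c) ∧
    (∃ C : ℝ, 0 < C ∧ ∀ x, |∑' n : ℕ, ((act P)^[n] f x - ∫ y, f y ∂μst)| ≤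
      C * (osc β V f).toReal * (1 + β * V x)) := by
  classical
  have hβ' : (0:ℝ) ≤ β := hβ.le
  have hNE : Nonempty X := by
    by_contra hne
    rw [not_nonempty_iff] at hne
    have h1 : μst Set.univ = 1 := measure_univ
    rw [Set.univ_eq_empty_iff.mpr hne, measure_empty] at h1
    exact zero_ne_one h1
  obtain ⟨x₀⟩ := hNE
  obtain ⟨hγr0, hγr1⟩ := hγr
  obtain ⟨hαγ, hα1⟩ := hαr
  have hα0 : (0:ℝ) ≤ α_r := le_trans hγr0.le hαγ.le
  have hγ₁1 : (1:ℝ) ≤ γ₁ := hγ₁.le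
  have hγ₁0 : (0:ℝ) ≤ γ₁ := by linarith
  set M : ℝ := 3 + β * K₁ + γ₁ with hM
  have hM1 : (1:ℝ) ≤ M := by nlinarith [mul_nonneg hβ' hK₁]
  have hM0 : (0:ℝ) ≤ M := by linarith
  set L : ℝ := (osc β V f).toReal with hL
  have hL0 : (0:ℝ) ≤ L := ENNReal.toReal_nonneg
  have hfLip : LipB β V L f := lipB_of_osc_lt_top hV0 hβ' hffin
  have hVPx : ∀ x, Integrable V (P x) := integrable_V_of_drift hV0 hVmeas hgrow
  have hmeasIter : ∀ (s : ℕ) (φ : X → ℝ), Measurable φ → Measurable ((act P)^[s] φ) := by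
    intro s
    induction s with
    | zero => exact fun φ hφ => hφ
    | succ s ih =>
      intro φ hφ
      rw [Function.iterate_succ_apply']
      exact measurable_act (ih φ hφ)
  have lipIter : ∀ (s : ℕ) (ℓ : ℝ) (φ : X → ℝ), 0 ≤ ℓ → Measurable φ → LipB β V ℓ φ →
      LipB β V (M ^ s * ℓ) ((act P)^[s] φ) := by
    intro s
    induction s with
    | zero => intro ℓ φ hℓ _ hlip; simpa using hlip
    | succ s ih =>
      intro ℓ φ hℓ hφ hlip
      rw [Function.iterate_succ_apply']
      have hstep := lip_act hV0 hVmeas hβ' hγ₁1 hK₁ hgrow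
        (mul_nonneg (pow_nonneg hM0 s) hℓ) (hmeasIter s φ hφ) (ih ℓ φ hℓ hφ hlip)
      have e : M * (M ^ s * ℓ) = M ^ (s + 1) * ℓ := by ring
      rwa [e] at hstep
  have oscq : ∀ q : ℕ, osc β V ((act P)^[r * q] f) ≤ ENNReal.ofReal (L * α_r ^ q) := by
    intro q
    induction q with
    | zero =>
      simp only [Nat.mul_zero, Function.iterate_zero, id_eq, pow_zero, mul_one]
      rw [hL]
      exact le_of_eq (ENNReal.ofReal_toReal hffin.ne).symm
    | succ q ih =>
      have hiter : (act P)^[r * (q + 1)] f = (act P)^[r] ((act P)^[r * q] f) := by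
        rw [show r * (q + 1) = r + r * q by ring, Function.iterate_add_apply]
      rw [hiter]
      calc osc β V ((act P)^[r] ((act P)^[r * q] f))
          ≤ ENNReal.ofReal α_r * osc β V ((act P)^[r * q] f) :=
            hosc_r _ (hmeasIter _ f hf) (lt_of_le_of_lt ih ENNReal.ofReal_lt_top)
        _ ≤ ENNReal.ofReal α_r * ENNReal.ofReal (L * α_r ^ q) := mul_le_mul_right ih _
        _ = ENNReal.ofReal (L * α_r ^ (q + 1)) := by
            rw [← ENNReal.ofReal_mul hα0]
            congr 1
            ring
  set ℓn : ℕ → ℝ := fun n => L * M ^ r * α_r ^ (n / r) with hℓn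
  have hℓn0 : ∀ n, 0 ≤ ℓn n := fun n => by
    rw [hℓn]
    positivity
  have hLipg : ∀ n : ℕ, LipB β V (ℓn n) ((act P)^[n] f) := by
    intro n
    have hsplit : (act P)^[n] f = (act P)^[n % r] ((act P)^[r * (n / r)] f) := by
      conv_lhs => rw [← Nat.mod_add_div n r]
      rw [Function.iterate_add_apply]
    have h1 : LipB β V (L * α_r ^ (n / r)) ((act P)^[r * (n / r)] f) :=
      (osc_le_ofReal_iff hV0 hβ' (by positivity)).mp (oscq (n / r))
    have h2 := lipIter (n % r) _ _ (by positivity) (hmeasIter _ f hf) h1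
    rw [← hsplit] at h2
    refine h2.mono hV0 hβ' ?_
    have hp : M ^ (n % r) ≤ M ^ r := pow_le_pow_right₀ hM1 (Nat.mod_lt n hr).le
    have hα : (0:ℝ) ≤ α_r ^ (n / r) := by positivity
    calc M ^ (n % r) * (L * α_r ^ (n / r)) ≤ M ^ r * (L * α_r ^ (n / r)) := by
          nlinarith [mul_nonneg hL0 hα]
      _ = ℓn n := by rw [hℓn]; ring
  have hgPint : ∀ (n : ℕ) (x : X), Integrable ((act P)^[n] f) (P x) :=
    fun n x => (hLipg n).integrable hV0 hβ' (hℓn0 n) (hmeasIter n f hf) (hVPx x) x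
  have hgμint : ∀ n : ℕ, Integrable ((act P)^[n] f) μst :=
    fun n => (hLipg n).integrable hV0 hβ' (hℓn0 n) (hmeasIter n f hf) hμint x₀
  have habs_max : ∀ (ψ : X → ℝ) (y : X), |max (ψ y) 0| ≤ |ψ y| := fun ψ y => by
    rw [abs_of_nonneg (le_max_right _ _)]
    exact max_le (le_abs_self _) (abs_nonneg _)
  have hinv : ∀ n : ℕ, ∫ y, (act P)^[n] f y ∂μst = ∫ y, f y ∂μst := by
    intro n
    induction n with
    | zero => rfl
    | succ n ih =>
      rw [Function.iterate_succ_apply']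
      have hip : Integrable (act P (fun y => max ((act P)^[n] f y) 0)) μst :=
        act_dominated_integrable hV0 hVmeas hβ' hγ₁0 hK₁ hgrow (hℓn0 n) (hLipg n) x₀
          ((hmeasIter n f hf).max measurable_const) (habs_max _) hμint
      have him : Integrable (act P (fun y => max (-((act P)^[n] f y)) 0)) μst :=
        act_dominated_integrable hV0 hVmeas hβ' hγ₁0 hK₁ hgrow (hℓn0 n) (hLipg n) x₀
          ((hmeasIter n f hf).neg.max measurable_const)
          (fun y => by simpa [abs_neg] using habs_max (fun z => -((act P)^[n] f z)) y) hμint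
      have hbind : Integrable ((act P)^[n] f) (μst.bind ⇑P) := by
        rw [hμinv]
        exact hgμint n
      rw [show (act P ((act P)^[n] f)) = act P ((act P)^[n] f) from rfl]
      rw [integral_act_eq μst (hmeasIter n f hf) (hgPint n) hbind hip him, hμinv]
      exact ih
  set W : ℝ := ∫ y, V y ∂μst with hW
  have hW0 : (0:ℝ) ≤ W := by
    rw [hW]
    exact integral_nonneg hV0
  have hdecay : ∀ (n : ℕ) (x : X),
      |(act P)^[n] f x - ∫ y, f y ∂μst| ≤ ℓn n * (2 + β * V x + β * W) := by
    intro n x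
    have e1 : (act P)^[n] f x - ∫ y, f y ∂μst
        = ∫ y, ((act P)^[n] f x - (act P)^[n] f y) ∂μst := by
      rw [integral_sub (integrable_const _) (hgμint n), integral_const]
      simp [hinv n]
    rw [e1]
    have hb : ∀ y, |(act P)^[n] f x - (act P)^[n] f y|
        ≤ ℓn n * (2 + β * V x) + ℓn n * β * V y := by
      intro y
      have hq := (hLipg n x y).trans
        (mul_le_mul_of_nonneg_left (dBeta_le hV0 hβ' x y) (hℓn0 n))
      nlinarith [hq]
    calc |∫ y, ((act P)^[n] f x - (act P)^[n] f y) ∂μst|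
        ≤ ∫ y, |(act P)^[n] f x - (act P)^[n] f y| ∂μst := by
          simpa [Real.norm_eq_abs] using norm_integral_le_integral_norm
            (μ := μst) (f := fun y => (act P)^[n] f x - (act P)^[n] f y)
      _ ≤ ∫ y, (ℓn n * (2 + β * V x) + ℓn n * β * V y) ∂μst := by
          refine integral_mono ((integrable_const _).sub (hgμint n)).abs ?_ hb
          simpa using integrable_affine hμint (ℓn n * (2 + β * V x)) (ℓn n * β)
      _ = ℓn n * (2 + β * V x) + ℓn n * β * W := by
          rw [integral_add (integrable_const _) (hμint.const_mul _), integral_const,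
            integral_const_mul, hW]
          simp
      _ ≤ ℓn n * (2 + β * V x + β * W) := le_of_eq (by ring)
  have hgeo : Summable (fun n : ℕ => α_r ^ (n / r)) := summable_geom_div r hr hα0 hα1
  have hsumℓ : Summable ℓn := by
    rw [hℓn]
    exact hgeo.mul_left (L * M ^ r)
  have part1 : ∀ x, Summable fun n : ℕ => |(act P)^[n] f x - ∫ y, f y ∂μst| := by
    intro x
    exact Summable.of_nonneg_of_le (fun n => abs_nonneg _) (fun n => hdecay n x)
      (hsumℓ.mul_right _)
  refine ⟨part1, ?_, ?_, ?_⟩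
  · -- Poisson equation
    intro x
    have hFint : ∀ n : ℕ, Integrable (fun y => (act P)^[n] f y - ∫ y, f y ∂μst) (P x) :=
      fun n => (hgPint n x).sub (integrable_const _)
    have hVlex := integral_V_le hV0 hVmeas hγ₁0 hK₁ hgrow x
    have hnormle : ∀ n : ℕ, ∫ y, ‖(act P)^[n] f y - ∫ y, f y ∂μst‖ ∂(P x)
        ≤ ℓn n * (2 + β * (γ₁ * V x + K₁) + β * W) := by
      intro n
      have hpt : ∀ y, ‖(act P)^[n] f y - ∫ y, f y ∂μst‖
          ≤ ℓn n * (2 + β * W) + ℓn n * β * V y := by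
        intro y
        rw [Real.norm_eq_abs]
        have := hdecay n y
        nlinarith [hℓn0 n]
      calc ∫ y, ‖(act P)^[n] f y - ∫ y, f y ∂μst‖ ∂(P x)
          ≤ ∫ y, (ℓn n * (2 + β * W) + ℓn n * β * V y) ∂(P x) := by
            refine integral_mono (hFint n).norm ?_ hpt
            simpa using integrable_affine (hVPx x) (ℓn n * (2 + β * W)) (ℓn n * β)
        _ = ℓn n * (2 + β * W) + ℓn n * β * ∫ y, V y ∂(P x) := by
            rw [integral_add (integrable_const _) ((hVPx x).const_mul _), integral_const,
              integral_const_mul]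
            simp
        _ ≤ ℓn n * (2 + β * (γ₁ * V x + K₁) + β * W) := by
            nlinarith [mul_le_mul_of_nonneg_left hVlex (mul_nonneg (hℓn0 n) hβ'), hℓn0 n,
              mul_nonneg hβ' hW0]
    have hnorm_sum : Summable fun n : ℕ =>
        ∫ y, ‖(act P)^[n] f y - ∫ y, f y ∂μst‖ ∂(P x) :=
      Summable.of_nonneg_of_le (fun n => integral_nonneg fun y => norm_nonneg _)
        (fun n => hnormle n) (hsumℓ.mul_right _)
    have hkey := integral_tsum_of_summable_integral_norm hFint hnorm_sum
    have hact : act P (fun z => ∑' n : ℕ, ((act P)^[n] f z - ∫ y, f y ∂μst)) x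
        = ∫ z, (∑' n : ℕ, ((act P)^[n] f z - ∫ y, f y ∂μst)) ∂(P x) := rfl
    rw [hact, ← hkey]
    have hterm : ∀ n : ℕ, (∫ z, ((act P)^[n] f z - ∫ y, f y ∂μst) ∂(P x))
        = (act P)^[n + 1] f x - ∫ y, f y ∂μst := by
      intro n
      rw [integral_sub (hgPint n x) (integrable_const _), integral_const,
        Function.iterate_succ_apply']
      simp [act]
    rw [tsum_congr hterm]
    have hsummable : Summable fun n : ℕ => (act P)^[n] f x - ∫ y, f y ∂μst :=
      (part1 x).of_abs
    rw [Summable.tsum_eq_zero_add hsummable]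
    simp only [Function.iterate_zero, id_eq]
    ring
  · -- uniqueness up to constants
    intro u₁ u₂ hm1 hm2 hw1 hw2 he1 he2
    have hb1 := wnorm_bound hV0 hβ' hw1
    have hb2 := wnorm_bound hV0 hβ' hw2
    have ht10 : (0:ℝ) ≤ (wnorm β V u₁).toReal := ENNReal.toReal_nonneg
    have ht20 : (0:ℝ) ≤ (wnorm β V u₂).toReal := ENNReal.toReal_nonneg
    have hwlip : LipB β V ((wnorm β V u₁).toReal + (wnorm β V u₂).toReal)
        (fun z => u₂ z - u₁ z) := by
      intro x y
      by_cases hxy : x = y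
      · simp [hxy, dBeta]
      · have hdd : dBeta β V x y = 2 + β * V x + β * V y := by simp [dBeta, hxy]
        rw [hdd]
        have e1 : |u₂ x - u₁ x - (u₂ y - u₁ y)| ≤ |u₂ x| + |u₁ x| + (|u₂ y| + |u₁ y|) := by
          have a1 : |u₂ x - u₁ x - (u₂ y - u₁ y)| ≤ |u₂ x - u₁ x| + |u₂ y - u₁ y| := by
            rw [sub_eq_add_neg]
            exact (abs_add_le _ _).trans (by rw [abs_neg])
          have a2 : |u₂ x - u₁ x| ≤ |u₂ x| + |u₁ x| := by
            rw [sub_eq_add_neg]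
            exact (abs_add_le _ _).trans (by rw [abs_neg])
          have a3 : |u₂ y - u₁ y| ≤ |u₂ y| + |u₁ y| := by
            rw [sub_eq_add_neg]
            exact (abs_add_le _ _).trans (by rw [abs_neg])
          linarith
        have b1x := hb1 x
        have b2x := hb2 x
        have b1y := hb1 y
        have b2y := hb2 y
        simp only
        nlinarith [e1]
    have hint1 : ∀ x, Integrable u₁ (P x) := by
      intro x
      refine Integrable.mono'
        (integrable_affine (hVPx x) (wnorm β V u₁).toReal ((wnorm β V u₁).toReal * β))
        hm1.aestronglyMeasurable (Filter.Eventually.of_forall fun y => ?_)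
      rw [Real.norm_eq_abs]
      calc |u₁ y| ≤ (wnorm β V u₁).toReal * (1 + β * V y) := hb1 y
        _ = (wnorm β V u₁).toReal + (wnorm β V u₁).toReal * β * V y := by ring
    have hint2 : ∀ x, Integrable u₂ (P x) := by
      intro x
      refine Integrable.mono'
        (integrable_affine (hVPx x) (wnorm β V u₂).toReal ((wnorm β V u₂).toReal * β))
        hm2.aestronglyMeasurable (Filter.Eventually.of_forall fun y => ?_)
      rw [Real.norm_eq_abs]
      calc |u₂ y| ≤ (wnorm β V u₂).toReal * (1 + β * V y) := hb2 y
        _ = (wnorm β V u₂).toReal + (wnorm β V u₂).toReal * β * V y := by ring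
    have hwfix : act P (fun z => u₂ z - u₁ z) = fun z => u₂ z - u₁ z := by
      funext x
      have hsplit : act P (fun z => u₂ z - u₁ z) x = act P u₂ x - act P u₁ x := by
        unfold act
        exact integral_sub (hint2 x) (hint1 x)
      rw [hsplit]
      have e1 := he1 x
      have e2 := he2 x
      linarith
    have hoscw : osc β V (fun z => u₂ z - u₁ z)
        ≤ ENNReal.ofReal ((wnorm β V u₁).toReal + (wnorm β V u₂).toReal) :=
      (osc_le_ofReal_iff hV0 hβ' (by linarith)).mpr hwlip
    have hoscfin : osc β V (fun z => u₂ z - u₁ z) < ⊤ :=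
      lt_of_le_of_lt hoscw ENNReal.ofReal_lt_top
    have hiterw : (act P)^[r] (fun z => u₂ z - u₁ z) = fun z => u₂ z - u₁ z :=
      Function.iterate_fixed hwfix r
    have hcontr := hosc_r (fun z => u₂ z - u₁ z) (hm2.sub hm1) hoscfin
    rw [hiterw] at hcontr
    have hosc0 : osc β V (fun z => u₂ z - u₁ z) = 0 := by
      by_contra hne
      have hlt : ENNReal.ofReal α_r * osc β V (fun z => u₂ z - u₁ z)
          < 1 * osc β V (fun z => u₂ z - u₁ z) :=
        ENNReal.mul_lt_mul_left hne hoscfin.ne (ENNReal.ofReal_lt_one.mpr hα1)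
      rw [one_mul] at hlt
      exact absurd (lt_of_le_of_lt hcontr hlt) (lt_irrefl _)
    refine ⟨u₂ x₀ - u₁ x₀, fun x => ?_⟩
    have hconst : u₂ x - u₁ x = u₂ x₀ - u₁ x₀ :=
      osc_eq_zero_const hV0 hβ' hosc0 x x₀
    linarith
  · -- the bound
    have hSα1 : (1:ℝ) ≤ ∑' n : ℕ, α_r ^ (n / r) := by
      have := Summable.le_tsum hgeo 0 (fun j _ => by positivity)
      simpa using this
    have hSα0 : (0:ℝ) ≤ ∑' n : ℕ, α_r ^ (n / r) := by linarith
    have hMr1 : (1:ℝ) ≤ M ^ r := one_le_pow₀ hM1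
    have hprod : (1:ℝ) ≤ M ^ r * (∑' n : ℕ, α_r ^ (n / r)) :=
      le_trans (le_of_eq (one_mul 1).symm) (mul_le_mul hMr1 hSα1 zero_le_one (by linarith))
    refine ⟨M ^ r * (∑' n : ℕ, α_r ^ (n / r)) * (2 + β * W),
      by nlinarith [mul_nonneg hβ' hW0], fun x => ?_⟩
    have hbVx : (0:ℝ) ≤ β * V x := mul_nonneg hβ' (hV0 x)
    have habs : |∑' n : ℕ, ((act P)^[n] f x - ∫ y, f y ∂μst)|
        ≤ ∑' n : ℕ, |(act P)^[n] f x - ∫ y, f y ∂μst| := by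
      simpa [Real.norm_eq_abs] using norm_tsum_le_tsum_norm
        (f := fun n : ℕ => (act P)^[n] f x - ∫ y, f y ∂μst)
        (by simpa [Real.norm_eq_abs] using part1 x)
    have h2 : ∑' n : ℕ, |(act P)^[n] f x - ∫ y, f y ∂μst|
        ≤ ∑' n : ℕ, ℓn n * (2 + β * V x + β * W) :=
      Summable.tsum_le_tsum (fun n => hdecay n x) (part1 x) (hsumℓ.mul_right _)
    have h3 : ∑' n : ℕ, ℓn n * (2 + β * V x + β * W)
        = (L * M ^ r * (∑' n : ℕ, α_r ^ (n / r))) * (2 + β * V x + β * W) := by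
      rw [tsum_mul_right]
      congr 1
      rw [hℓn]
      exact tsum_mul_left
    calc |∑' n : ℕ, ((act P)^[n] f x - ∫ y, f y ∂μst)|
        ≤ (L * M ^ r * (∑' n : ℕ, α_r ^ (n / r))) * (2 + β * V x + β * W) := by
          rw [← h3]
          exact habs.trans h2
      _ ≤ (L * M ^ r * (∑' n : ℕ, α_r ^ (n / r))) * ((2 + β * W) * (1 + β * V x)) := by
          refine mul_le_mul_of_nonneg_left ?_
            (mul_nonneg (mul_nonneg hL0 (by positivity)) hSα0)
          nlinarith [mul_nonneg hbVx (mul_nonneg hβ' hW0)]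
      _ = M ^ r * (∑' n : ℕ, α_r ^ (n / r)) * (2 + β * W) * L * (1 + β * V x) := by ring

end PoissonPaper
end
end

section
/- Then there exist a positive integer r, constants γ_r ∈ (0, 1), K_r ≥ 0, γ₁ > 1 and K₁ ≥ 0 such that for all θ ∈ Θ and all x ∈ X: (P_θ^{*r} V)(x) ≤ γ_r V(x) + K_r (uniform drift condition for the r-step kernels) and (P_θ* V)(x) ≤ γ₁ V(x) + K₁ (uniform one-step growth condition). -/
open MeasureTheory ProbabilityTheory ENNReal

noncomputable section

namespace PoissonPaper

variable {X : Type*} [MeasurableSpace X]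

/-- Auxiliary: transfer an integral bound for a dominating function `W` to `V`. -/
lemma transfer_bound {X : Type*} [MeasurableSpace X] (μ : Measure X) [IsProbabilityMeasure μ]
    (V W : X → ℝ) (hVmeas : Measurable V) (a b t u : ℝ) (ha : 0 < a)
    (hW0 : ∀ y, 0 ≤ W y) (hlow : ∀ y, a * V y + b ≤ W y)
    (hbound : ∫⁻ y, ENNReal.ofReal (W y) ∂μ ≤ ENNReal.ofReal t) (ht : 0 ≤ t)
    (hu : t + |b| ≤ a * u) :
    ∫⁻ y, ENNReal.ofReal (V y) ∂μ ≤ ENNReal.ofReal u := by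
  have key : ENNReal.ofReal a * ∫⁻ y, ENNReal.ofReal (V y) ∂μ ≤ ENNReal.ofReal (t + |b|) := by
    rw [← lintegral_const_mul _ hVmeas.ennreal_ofReal]
    calc ∫⁻ y, ENNReal.ofReal a * ENNReal.ofReal (V y) ∂μ
        ≤ ∫⁻ y, (ENNReal.ofReal (W y) + ENNReal.ofReal |b|) ∂μ := by
          refine lintegral_mono fun y => ?_
          rw [← ENNReal.ofReal_mul ha.le, ← ENNReal.ofReal_add (hW0 y) (abs_nonneg b)]
          refine ENNReal.ofReal_le_ofReal ?_
          have h1 := hlow y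
          have h2 := neg_abs_le b
          linarith
      _ = (∫⁻ y, ENNReal.ofReal (W y) ∂μ) + ENNReal.ofReal |b| := by
          rw [lintegral_add_right _ measurable_const, lintegral_const, measure_univ, mul_one]
      _ ≤ ENNReal.ofReal t + ENNReal.ofReal |b| := add_le_add hbound le_rfl
      _ = ENNReal.ofReal (t + |b|) := (ENNReal.ofReal_add ht (abs_nonneg b)).symm
  have ha' : (ENNReal.ofReal a) ≠ 0 := (ENNReal.ofReal_pos.mpr ha).ne'
  calc ∫⁻ y, ENNReal.ofReal (V y) ∂μ
      ≤ ENNReal.ofReal (t + |b|) / ENNReal.ofReal a := by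
        rw [ENNReal.le_div_iff_mul_le (Or.inl ha') (Or.inl ENNReal.ofReal_ne_top), mul_comm]
        exact key
    _ ≤ ENNReal.ofReal u := by
        rw [← ENNReal.ofReal_div_of_pos ha]
        refine ENNReal.ofReal_le_ofReal ?_
        rw [div_le_iff₀ ha]
        linarith

/-- Individual drift conditions with comparable Lyapunov functions imply
a uniform `r`-step drift condition and a uniform one-step growth condition for `V`. -/
theorem uniform_drift_of_individual_drifts
    {X : Type*} [MeasurableSpace X] {k : ℕ} {Θ : Set (EuclideanSpace ℝ (Fin k))}
    (hΘ : Θ.Nonempty) (P : Θ → Kernel X X) [∀ θ, IsMarkovKernel (P θ)]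
    (Vθ : Θ → X → ℝ) (hVθmeas : ∀ θ, Measurable (Vθ θ)) (hVθ0 : ∀ θ x, 0 ≤ Vθ θ x)
    (γ K : ℝ) (hγ : γ ∈ Set.Ioo (0:ℝ) 1) (hK : 0 ≤ K)
    (hdrift : ∀ θ, Drift (P θ) (Vθ θ) γ K)
    (V : X → ℝ) (hVmeas : Measurable V) (hV0 : ∀ x, 0 ≤ V x)
    (a b c d : ℝ) (ha : 0 < a) (hc : 0 < c)
    (hsandwich : ∀ θ x, a * V x + b ≤ Vθ θ x ∧ Vθ θ x ≤ c * V x + d) :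
    ∃ r : ℕ, 0 < r ∧ ∃ γr ∈ Set.Ioo (0:ℝ) 1, ∃ Kr ≥ (0:ℝ), ∃ γ₁ > (1:ℝ), ∃ K₁ ≥ (0:ℝ),
      ∀ θ, Drift (kpow (P θ) r) V γr Kr ∧ Drift (P θ) V γ₁ K₁ := by
  obtain ⟨hγ0, hγ1⟩ := hγ
  have h1γ : (0:ℝ) < 1 - γ := by linarith
  set K' : ℝ := K / (1 - γ) with hK'def
  have hK'0 : 0 ≤ K' := div_nonneg hK h1γ.le
  -- iterated drift for Vθ
  have iter : ∀ θ (m : ℕ) (x : X),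
      ∫⁻ y, ENNReal.ofReal (Vθ θ y) ∂(kpow (P θ) m x)
        ≤ ENNReal.ofReal (γ ^ m * Vθ θ x + K') := by
    intro θ m
    induction m with
    | zero =>
      intro x
      have : kpow (P θ) 0 = Kernel.id := rfl
      rw [this, Kernel.id_apply, lintegral_dirac' _ ((hVθmeas θ).ennreal_ofReal)]
      refine ENNReal.ofReal_le_ofReal ?_
      simp only [pow_zero, one_mul]
      linarith
    | succ n ih =>
      intro x
      have hcomp : kpow (P θ) (n + 1) = (P θ) ∘ₖ kpow (P θ) n := rfl
      calc ∫⁻ y, ENNReal.ofReal (Vθ θ y) ∂(kpow (P θ) (n + 1) x)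
          = ∫⁻ z, ∫⁻ y, ENNReal.ofReal (Vθ θ y) ∂(P θ z) ∂(kpow (P θ) n x) := by
            rw [hcomp, Kernel.comp_apply,
              Measure.lintegral_bind ((P θ).measurable.aemeasurable) ((hVθmeas θ).ennreal_ofReal.aemeasurable)]
        _ ≤ ∫⁻ z, (ENNReal.ofReal γ * ENNReal.ofReal (Vθ θ z) + ENNReal.ofReal K)
              ∂(kpow (P θ) n x) := by
            refine lintegral_mono fun z => ?_
            calc ∫⁻ y, ENNReal.ofReal (Vθ θ y) ∂(P θ z)
                ≤ ENNReal.ofReal (γ * Vθ θ z + K) := hdrift θ z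
              _ = ENNReal.ofReal γ * ENNReal.ofReal (Vθ θ z) + ENNReal.ofReal K := by
                  rw [ENNReal.ofReal_add (mul_nonneg hγ0.le (hVθ0 θ z)) hK,
                    ENNReal.ofReal_mul hγ0.le]
        _ = ENNReal.ofReal γ * (∫⁻ z, ENNReal.ofReal (Vθ θ z) ∂(kpow (P θ) n x))
              + ENNReal.ofReal K := by
            rw [lintegral_add_right _ measurable_const,
              lintegral_const_mul _ ((hVθmeas θ).ennreal_ofReal),
              lintegral_const, measure_univ, mul_one]
        _ ≤ ENNReal.ofReal γ * ENNReal.ofReal (γ ^ n * Vθ θ x + K') + ENNReal.ofReal K :=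
            add_le_add (mul_le_mul_right (ih x) _) le_rfl
        _ = ENNReal.ofReal (γ ^ (n + 1) * Vθ θ x + K') := by
            rw [← ENNReal.ofReal_mul hγ0.le, ← ENNReal.ofReal_add
              (mul_nonneg hγ0.le (add_nonneg (mul_nonneg (pow_nonneg hγ0.le n) (hVθ0 θ x)) hK'0)) hK]
            congr 1
            rw [hK'def]
            field_simp
            ring
  -- choose r
  obtain ⟨n, hn⟩ := exists_pow_lt_of_lt_one (div_pos ha hc) hγ1
  set r : ℕ := n + 1 with hrdef
  have hγrlt : γ ^ r < a / c := by
    have : γ ^ r ≤ γ ^ n := by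
      rw [hrdef, pow_succ]
      exact mul_le_of_le_one_right (pow_nonneg hγ0.le n) hγ1.le
    linarith
  have hγrpos : (0:ℝ) < γ ^ r := pow_pos hγ0 r
  have hγrle1 : γ ^ r ≤ 1 := pow_le_one₀ hγ0.le hγ1.le
  set γr : ℝ := γ ^ r * c / a with hγrdef
  set Kr : ℝ := (|d| + K' + |b|) / a with hKrdef
  set γ₁ : ℝ := γ * c / a + 1 with hγ₁def
  set K₁ : ℝ := (γ * |d| + K + |b|) / a with hK₁def
  have hcVd : ∀ θ x, 0 ≤ c * V x + d := fun θ x => le_trans (hVθ0 θ x) (hsandwich θ x).2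
  refine ⟨r, Nat.succ_pos n, γr, ⟨by positivity, ?_⟩, Kr, by positivity, γ₁,
    by rw [hγ₁def]; have h := div_pos (mul_pos hγ0 hc) ha; linarith, K₁, by positivity, fun θ => ⟨?_, ?_⟩⟩
  · rw [hγrdef, div_lt_one ha]
    exact (lt_div_iff₀ hc).mp hγrlt
  · -- r-step drift for V
    intro x
    refine transfer_bound _ V (Vθ θ) hVmeas a b (γ ^ r * (c * V x + d) + K') _ ha
      (hVθ0 θ) (fun y => (hsandwich θ y).1) ?_ ?_ ?_
    · refine le_trans (iter θ r x) (ENNReal.ofReal_le_ofReal ?_)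
      nlinarith [(hsandwich θ x).2]
    · nlinarith [hcVd θ x]
    · have harith : a * (γr * V x + Kr) = γ ^ r * c * V x + (|d| + K' + |b|) := by
        rw [hγrdef, hKrdef]; field_simp
      rw [harith]
      have hd : γ ^ r * d ≤ |d| := by
        calc γ ^ r * d ≤ γ ^ r * |d| := mul_le_mul_of_nonneg_left (le_abs_self d) hγrpos.le
          _ ≤ 1 * |d| := mul_le_mul_of_nonneg_right hγrle1 (abs_nonneg d)
          _ = |d| := one_mul _
      nlinarith
  · -- one-step growth for V
    intro x
    refine transfer_bound _ V (Vθ θ) hVmeas a b (γ * (c * V x + d) + K) _ ha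
      (hVθ0 θ) (fun y => (hsandwich θ y).1) ?_ ?_ ?_
    · refine le_trans (hdrift θ x) (ENNReal.ofReal_le_ofReal ?_)
      nlinarith [(hsandwich θ x).2]
    · nlinarith [hcVd θ x]
    · have harith : a * (γ₁ * V x + K₁) = (γ * c + a) * V x + (γ * |d| + K + |b|) := by
        rw [hγ₁def, hK₁def]; field_simp
      rw [harith]
      have hd : γ * d ≤ γ * |d| := mul_le_mul_of_nonneg_left (le_abs_self d) hγ0.le
      nlinarith [hV0 x]

end PoissonPaper
end
end
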